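/- arXiv:1107.3178 — 6 statements merged into one kernel-verified Lean document; each statement's English description precedes it below -/
import Mathlib

section
/- Let q be a prime power, n ≥ 1, and let F_q denote the finite field with q elements. If F is a subset of the general linear group GL_n(F_q) such that for any two matrices T, S in F there exists a non-zero row vector α in F_q^n with αT = αS, then |F| ≤ q^{n(n-1)/2} · ∏_{i=1}^{n-1} (q^i − 1). -/
open Polynomial

lemma exists_singer (F : Type*) [Field F] [Fintype F] {n : ℕ} (hn : n ≠ 0) :
    ∃ C : Finset (Matrix.GeneralLinearGroup (Fin n) F),
      C.card = Fintype.card F ^ n - 1 ∧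
      ∀ c1 ∈ C, ∀ c2 ∈ C, c1 ≠ c2 →
        IsUnit ((c1 : Matrix (Fin n) (Fin n) F) - (c2 : Matrix (Fin n) (Fin n) F)) := by
  classical
  set q := Fintype.card F with hqdef
  have hq2 : 1 < q := Fintype.one_lt_card
  obtain ⟨p, hp_char⟩ := CharP.exists F
  haveI := hp_char
  obtain ⟨d, hp_prime, hqd⟩ := FiniteField.card F p
  haveI : Fact p.Prime := ⟨hp_prime⟩
  set g : Polynomial F := X ^ q ^ n - X with hg
  set K := Polynomial.SplittingField g with hK
  haveI : CharP K p := (Algebra.charP_iff F K p).mp ‹_›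
  have hpdvd : p ∣ q ^ n := by
    rw [hqdef, hqd, ← pow_mul]
    exact dvd_pow_self p (by positivity)
  have hsep : g.Separable := galois_poly_separable p (q ^ n) hpdvd
  have hgne : g ≠ 0 := FiniteField.X_pow_card_pow_sub_X_ne_zero F hn hq2
  haveI : Finite K := Module.finite_of_finite F
  haveI : Fintype K := Fintype.ofFinite K
  have key : Fintype.card (g.rootSet K) = q ^ n := by
    rw [Polynomial.card_rootSet_eq_natDegree hsep (Polynomial.SplittingField.splits g)]
    exact FiniteField.X_pow_card_pow_sub_X_natDegree_eq F hn hq2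
  -- the Frobenius iterate as an F-algebra hom
  have hqn : q ^ n = p ^ (d * n) := by rw [hqdef, hqd, ← pow_mul]
  have hfrob : ∀ x : K, iterateFrobenius K p (d * n) x = x ^ q ^ n := by
    intro x; rw [iterateFrobenius_def, hqn]
  let frobA : K →ₐ[F] K :=
    { toRingHom := iterateFrobenius K p (d * n)
      commutes' := fun r => by
        show iterateFrobenius K p (d * n) (algebraMap F K r) = algebraMap F K r
        rw [hfrob, ← map_pow, FiniteField.pow_card_pow] }
  have huniv : g.rootSet K = Set.univ := by
    have hsub : g.rootSet K ⊆ (AlgHom.equalizer frobA (AlgHom.id F K) : Set K) := by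
      intro x hx
      rw [Polynomial.mem_rootSet_of_ne hgne] at hx
      simp only [hg, map_sub, map_pow, Polynomial.aeval_X, sub_eq_zero] at hx
      show frobA x = x
      simpa [frobA, hfrob] using hx
    have htop : (⊤ : Subalgebra F K) ≤ AlgHom.equalizer frobA (AlgHom.id F K) := by
      rw [← Polynomial.SplittingField.adjoin_rootSet g]
      exact Algebra.adjoin_le hsub
    ext x
    simp only [Set.mem_univ, iff_true]
    have hx : frobA x = x := htop (Algebra.mem_top)
    rw [Polynomial.mem_rootSet_of_ne hgne]
    simp only [hg, map_sub, map_pow, Polynomial.aeval_X, sub_eq_zero]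
    simpa [frobA, hfrob] using hx
  have hcardK : Fintype.card K = q ^ n := by
    rw [← key]
    rw [← Nat.card_eq_fintype_card, ← Nat.card_eq_fintype_card]
    exact (Nat.card_congr ((Equiv.setCongr huniv).trans (Equiv.Set.univ K))).symm
  have hfinrank : Module.finrank F K = n := by
    have := Module.card_eq_pow_finrank (K := F) (V := K)
    rw [hcardK] at this
    exact (Nat.pow_right_injective hq2 this.symm)
  let b : Module.Basis (Fin n) F K := Module.finBasisOfFinrankEq F K hfinrank
  let φ : K →ₐ[F] Matrix (Fin n) (Fin n) F :=
    (LinearMap.toMatrixAlgEquiv b).toAlgHom.comp (Algebra.lmul F K)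
  have hφinj : Function.Injective φ := by
    intro x y hxy
    have : Algebra.lmul F K x = Algebra.lmul F K y :=
      (LinearMap.toMatrixAlgEquiv b).injective (by simpa [φ] using hxy)
    simpa using congrArg (fun f : Module.End F K => f 1) this
  let ψ : Kˣ →* (Matrix (Fin n) (Fin n) F)ˣ := Units.map (φ : K →* Matrix (Fin n) (Fin n) F)
  have hψinj : Function.Injective ψ := Units.map_injective hφinj
  refine ⟨Finset.univ.image ψ, ?_, ?_⟩
  · rw [Finset.card_image_of_injective _ hψinj, Finset.card_univ, Fintype.card_units, hcardK]
  · rintro c1 hc1 c2 hc2 hne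
    simp only [Finset.mem_image, Finset.mem_univ, true_and] at hc1 hc2
    obtain ⟨u, rfl⟩ := hc1
    obtain ⟨v, rfl⟩ := hc2
    have huv : u ≠ v := fun h => hne (by rw [h])
    have hval : ((ψ u : (Matrix (Fin n) (Fin n) F)ˣ) : Matrix (Fin n) (Fin n) F) -
        ((ψ v : (Matrix (Fin n) (Fin n) F)ˣ) : Matrix (Fin n) (Fin n) F)
        = φ ((u : K) - (v : K)) := by
      simp [ψ, map_sub]
    rw [hval]
    have : IsUnit ((u : K) - (v : K)) :=
      (sub_ne_zero.mpr (fun h => huv (Units.ext h))).isUnit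
    exact this.map φ


lemma ekr_arith (q n : ℕ) (hq : 2 ≤ q) (hn : 1 ≤ n) :
    ∏ i : Fin n, (q ^ n - q ^ (i : ℕ)) =
      (q ^ n - 1) * (q ^ (n * (n - 1) / 2) * ∏ i ∈ Finset.Icc 1 (n - 1), (q ^ i - 1)) := by
  rw [Fin.prod_univ_eq_prod_range (fun i => q ^ n - q ^ i) n]
  have hterm : ∀ i ∈ Finset.range n, q ^ n - q ^ i = q ^ i * (q ^ (n - i) - 1) := by
    intro i hi
    rw [Nat.mul_sub, mul_one, ← pow_add, Nat.add_sub_cancel' (Finset.mem_range.mp hi).le]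
  rw [Finset.prod_congr rfl hterm, Finset.prod_mul_distrib, Finset.prod_pow_eq_pow_sum,
    Finset.sum_range_id]
  have hrefl : ∏ i ∈ Finset.range n, (q ^ (n - i) - 1)
      = ∏ j ∈ Finset.range n, (q ^ (j + 1) - 1) := by
    rw [← Finset.prod_range_reflect (fun j => q ^ (j + 1) - 1) n]
    refine Finset.prod_congr rfl fun i hi => ?_
    have : n - 1 - i + 1 = n - i := by
      have := Finset.mem_range.mp hi; omega
    rw [this]
  rw [hrefl]
  have hsplit : ∏ j ∈ Finset.range n, (q ^ (j + 1) - 1)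
      = (∏ j ∈ Finset.range (n - 1), (q ^ (j + 1) - 1)) * (q ^ n - 1) := by
    conv_lhs => rw [show n = (n - 1) + 1 by omega]
    rw [Finset.prod_range_succ, show n - 1 + 1 = n by omega]
  have hIcc : ∏ i ∈ Finset.Icc 1 (n - 1), (q ^ i - 1)
      = ∏ j ∈ Finset.range (n - 1), (q ^ (j + 1) - 1) := by
    rw [show Finset.Icc 1 (n - 1) = Finset.Ico 1 ((n - 1) + 1) by rw [Finset.Ico_add_one_right_eq_Icc],
      Finset.prod_Ico_eq_prod_range]
    simp [add_comm]
  rw [hsplit, hIcc]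
  ring


lemma vecMul_eq_zero_of_isUnit {n : ℕ} {F : Type*} [Field F]
    {M : Matrix (Fin n) (Fin n) F} (hM : IsUnit M) {x : Fin n → F}
    (hx : Matrix.vecMul x M = 0) : x = 0 := by
  obtain ⟨u, rfl⟩ := hM
  have : Matrix.vecMul (Matrix.vecMul x (u : Matrix (Fin n) (Fin n) F)) ((u⁻¹ : (Matrix (Fin n) (Fin n) F)ˣ) : Matrix (Fin n) (Fin n) F) = 0 := by
    rw [hx, Matrix.zero_vecMul]
  rwa [Matrix.vecMul_vecMul, u.mul_inv, Matrix.vecMul_one] at this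

/-- **Erdős–Ko–Rado theorem in general linear groups** (Guo–Wang).
If `𝓕` is an intersecting set in `GL n (F_q)`, i.e. for any `T, S ∈ 𝓕` there is a
non-zero row vector `α` with `α T = α S`, then
`|𝓕| ≤ q^(n(n-1)/2) * ∏_{i=1}^{n-1} (q^i - 1)`. -/
theorem ekr_general_linear_group
    (F : Type*) [Field F] [Fintype F] (q : ℕ) (hq : Fintype.card F = q)
    (n : ℕ) (hn : 1 ≤ n)
    (𝓕 : Finset (Matrix.GeneralLinearGroup (Fin n) F))
    (h𝓕 : ∀ T ∈ 𝓕, ∀ S ∈ 𝓕, ∃ α : Fin n → F, α ≠ 0 ∧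
      Matrix.vecMul α (T : Matrix (Fin n) (Fin n) F) =
        Matrix.vecMul α (S : Matrix (Fin n) (Fin n) F)) :
    𝓕.card ≤ q ^ (n * (n - 1) / 2) * ∏ i ∈ Finset.Icc 1 (n - 1), (q ^ i - 1) := by
  classical
  subst hq
  set q := Fintype.card F with hqdef
  have hq2 : 2 ≤ q := Fintype.one_lt_card
  obtain ⟨C, hCcard, hCsub⟩ := exists_singer F (Nat.one_le_iff_ne_zero.mp hn)
  -- at most one translate of each clique element in 𝓕
  have key : ∀ g : Matrix.GeneralLinearGroup (Fin n) F, ∀ c1 ∈ C, ∀ c2 ∈ C, c1 * g ∈ 𝓕 → c2 * g ∈ 𝓕 → c1 = c2 := by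
    intro g c1 hc1 c2 hc2 h1 h2
    by_contra hne
    obtain ⟨α, hα, hEq⟩ := h𝓕 _ h1 _ h2
    have hEq' : Matrix.vecMul (Matrix.vecMul α (c1 : Matrix (Fin n) (Fin n) F))
        (g : Matrix (Fin n) (Fin n) F) =
        Matrix.vecMul (Matrix.vecMul α (c2 : Matrix (Fin n) (Fin n) F))
        (g : Matrix (Fin n) (Fin n) F) := by
      rw [Matrix.vecMul_vecMul, Matrix.vecMul_vecMul]
      exact hEq
    have hsub : Matrix.vecMul
        ((Matrix.vecMul α (c1 : Matrix (Fin n) (Fin n) F)) -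
         (Matrix.vecMul α (c2 : Matrix (Fin n) (Fin n) F)))
        (g : Matrix (Fin n) (Fin n) F) = 0 := by
      rw [Matrix.sub_vecMul, hEq', sub_self]
    have h0 := vecMul_eq_zero_of_isUnit g.isUnit hsub
    have : Matrix.vecMul α ((c1 : Matrix (Fin n) (Fin n) F) -
        (c2 : Matrix (Fin n) (Fin n) F)) = 0 := by
      rw [Matrix.vecMul_sub]
      exact h0 ▸ rfl
    exact hα (vecMul_eq_zero_of_isUnit (hCsub c1 hc1 c2 hc2 hne) this)
  have h1 : ∀ g : Matrix.GeneralLinearGroup (Fin n) F, (C.filter (fun c => c * g ∈ 𝓕)).card ≤ 1 := by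
    intro g
    refine Finset.card_le_one.mpr fun a ha b hb => ?_
    rw [Finset.mem_filter] at ha hb
    exact key g a ha.1 b hb.1 ha.2 hb.2
  have h2 : ∀ c : Matrix.GeneralLinearGroup (Fin n) F, (Finset.univ.filter (fun g : Matrix.GeneralLinearGroup (Fin n) F => c * g ∈ 𝓕)).card = 𝓕.card := by
    intro c
    have himg : Finset.univ.filter (fun g : Matrix.GeneralLinearGroup (Fin n) F => c * g ∈ 𝓕)
        = 𝓕.image (fun t => c⁻¹ * t) := by
      ext g
      simp only [Finset.mem_filter, Finset.mem_univ, true_and, Finset.mem_image]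
      constructor
      · intro h; exact ⟨c * g, h, by group⟩
      · rintro ⟨t, ht, rfl⟩; simpa [mul_assoc] using ht
    rw [himg, Finset.card_image_of_injective _ (mul_right_injective c⁻¹)]
  have hcount : C.card * 𝓕.card ≤ Fintype.card (Matrix.GeneralLinearGroup (Fin n) F) := by
    calc C.card * 𝓕.card = ∑ c ∈ C, 𝓕.card := by rw [Finset.sum_const, smul_eq_mul]
      _ = ∑ c ∈ C, (Finset.univ.filter (fun g : Matrix.GeneralLinearGroup (Fin n) F => c * g ∈ 𝓕)).card := by
          exact Finset.sum_congr rfl fun c _ => (h2 c).symm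
      _ = ∑ c ∈ C, ∑ g : Matrix.GeneralLinearGroup (Fin n) F, (if c * g ∈ 𝓕 then 1 else 0) := by
          exact Finset.sum_congr rfl fun c _ => Finset.card_filter _ _
      _ = ∑ g : Matrix.GeneralLinearGroup (Fin n) F, ∑ c ∈ C, (if c * g ∈ 𝓕 then 1 else 0) := Finset.sum_comm
      _ = ∑ g : Matrix.GeneralLinearGroup (Fin n) F, (C.filter (fun c => c * g ∈ 𝓕)).card := by
          exact Finset.sum_congr rfl fun g _ => (Finset.card_filter _ _).symm
      _ ≤ ∑ g : Matrix.GeneralLinearGroup (Fin n) F, 1 := Finset.sum_le_sum fun g _ => h1 g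
      _ = Fintype.card (Matrix.GeneralLinearGroup (Fin n) F) := by simp
  have hG : Fintype.card (Matrix.GeneralLinearGroup (Fin n) F) =
      (q ^ n - 1) * (q ^ (n * (n - 1) / 2) * ∏ i ∈ Finset.Icc 1 (n - 1), (q ^ i - 1)) := by
    rw [← Nat.card_eq_fintype_card]
    rw [Matrix.card_GL_field]
    exact ekr_arith q n hq2 hn
  rw [hCcard] at hcount
  rw [hG] at hcount
  have hpos : 0 < q ^ n - 1 := by
    have : 2 ≤ q ^ n := le_trans hq2 (Nat.le_self_pow (Nat.one_le_iff_ne_zero.mp hn) q)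
    omega
  exact Nat.le_of_mul_le_mul_left hcount hpos
end

section
/- Let q be a prime power and n ≥ 1. If I is a set of matrices in GL_n(F_q) such that T − S is invertible for all distinct T, S ∈ I, then |I| ≤ q^n − 1. -/
/-- If `I` is a set of matrices in `GL n (F_q)` such that `T - S` is invertible for all
distinct `T, S ∈ I`, then `|I| ≤ q^n - 1`. -/
theorem coclique_bound_general_linear_group
    (F : Type*) [Field F] [Fintype F] (q : ℕ) (hq : Fintype.card F = q)
    (n : ℕ) (hn : 1 ≤ n)
    (I : Finset (Matrix.GeneralLinearGroup (Fin n) F))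
    (hI : ∀ T ∈ I, ∀ S ∈ I, T ≠ S →
      IsUnit ((T : Matrix (Fin n) (Fin n) F) - (S : Matrix (Fin n) (Fin n) F))) :
    I.card ≤ q ^ n - 1 := by
  classical
  set v : Fin n → F := Pi.single ⟨0, hn⟩ 1 with hv
  have hv0 : v ≠ 0 := by
    intro h
    have := congrFun h ⟨0, hn⟩
    simp [hv] at this
  have key : I.card ≤ ((Finset.univ : Finset (Fin n → F)).erase 0).card := by
    refine Finset.card_le_card_of_injOn
      (fun T => (T : Matrix (Fin n) (Fin n) F).mulVec v) ?_ ?_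
    · intro T hT
      simp only [Finset.mem_coe, Finset.mem_erase, Finset.mem_univ, and_true]
      intro h0
      have hinj : Function.Injective ((T : Matrix (Fin n) (Fin n) F).mulVec) :=
        Matrix.mulVec_injective_iff_isUnit.2 T.isUnit
      apply hv0
      apply hinj
      rw [h0, Matrix.mulVec_zero]
    · intro T hT S hS hTS
      by_contra hne
      have hu := hI T hT S hS hne
      have hinj : Function.Injective
          (((T : Matrix (Fin n) (Fin n) F) - (S : Matrix (Fin n) (Fin n) F)).mulVec) :=
        Matrix.mulVec_injective_iff_isUnit.2 hu
      apply hv0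
      apply hinj
      simp only at hTS
      rw [Matrix.sub_mulVec, Matrix.mulVec_zero, hTS, sub_self]
  calc I.card ≤ _ := key
    _ = q ^ n - 1 := by
        rw [Finset.card_erase_of_mem (Finset.mem_univ _), Finset.card_univ,
          Fintype.card_fun, Fintype.card_fin, hq]
end

section
/- Let q be a prime power and n ≥ 1. There exists a set of q^n − 1 matrices T_1, …, T_{q^n−1} in GL_n(F_q) such that T_i − T_j is invertible for all i ≠ j. -/
open Polynomial

/-- The splitting field of `X^(q^n) - X` over a finite field `F` with `q` elements
has exactly `q^n` elements. -/
lemma aux_card_splittingField (F : Type*) [Field F] [Fintype F] (q n : ℕ)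
    (hq : Fintype.card F = q) (hn : 1 ≤ n)
    (K : Type*) [Field K] [Algebra F K] [Fintype K]
    [IsSplittingField F K (X ^ q ^ n - X : F[X])] :
    Fintype.card K = q ^ n := by
  classical
  obtain ⟨p, hchar⟩ := CharP.exists F
  haveI := hchar
  obtain ⟨k, hp, hk⟩ := FiniteField.card F p
  rw [hq] at hk
  haveI : Fact p.Prime := ⟨hp⟩
  have hq2 : 1 < q := hq ▸ Fintype.one_lt_card
  haveI : CharP K p := charP_of_injective_algebraMap (algebraMap F K).injective p
  set g : F[X] := X ^ q ^ n - X with hg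
  have hpq : p ∣ q ^ n := hk ▸ dvd_pow (dvd_pow_self p k.ne_zero) (by omega : n ≠ 0)
  have hsep : g.Separable := galois_poly_separable p (q ^ n) hpq
  have hdeg : g.natDegree = q ^ n :=
    FiniteField.X_pow_card_sub_X_natDegree_eq F (Nat.one_lt_pow (by omega : n ≠ 0) hq2)
  -- every element of K is a root of g
  have hroot : ∀ x : K, x ^ q ^ n = x := by
    obtain ⟨m, hm⟩ : ∃ m, q ^ n = p ^ m := ⟨k * n, by rw [hk, pow_mul]⟩
    intro x
    have hx : x ∈ Subring.closure (Set.range (algebraMap F K) ∪ g.rootSet K) := by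
      rw [← Algebra.mem_adjoin_iff, IsSplittingField.adjoin_rootSet K g]
      trivial
    have hle : Subring.closure (Set.range (algebraMap F K) ∪ g.rootSet K)
        ≤ RingHom.eqLocus (iterateFrobenius K p m) (RingHom.id K) := by
      rw [Subring.closure_le]
      rintro y (⟨a, rfl⟩ | hy)
      · show iterateFrobenius K p m (algebraMap F K a) = algebraMap F K a
        rw [iterateFrobenius_def, ← map_pow, ← hm, ← hq, FiniteField.pow_card_pow]
      · show iterateFrobenius K p m y = y
        rw [iterateFrobenius_def, ← hm]
        have := (mem_rootSet.mp hy).2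
        rw [hg, map_sub, map_pow, aeval_X, sub_eq_zero] at this
        exact this
    have := hle hx
    have : iterateFrobenius K p m x = x := this
    rwa [iterateFrobenius_def, ← hm] at this
  -- so the rootSet is everything
  have huniv : g.rootSet K = Set.univ := by
    rw [Set.eq_univ_iff_forall]
    intro x
    rw [mem_rootSet]
    refine ⟨by
      intro h0
      have h1 := hdeg
      rw [h0, natDegree_zero] at h1
      exact absurd h1.symm (pow_ne_zero n (by omega)), ?_⟩
    rw [hg, map_sub, map_pow, aeval_X, sub_eq_zero]
    exact hroot x
  have hcard : Fintype.card (g.rootSet K) = g.natDegree :=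
    card_rootSet_eq_natDegree hsep (IsSplittingField.splits K g)
  rw [hdeg] at hcard
  have h2 : Nat.card (g.rootSet K) = Nat.card K := by
    rw [huniv]; exact Nat.card_congr (Equiv.Set.univ K)
  rw [← Nat.card_eq_fintype_card, ← h2, Nat.card_eq_fintype_card, hcard]

/-- There exist `q^n - 1` matrices in `GL n (F_q)` all of whose pairwise differences
are invertible. -/
theorem exists_large_difference_family
    (F : Type*) [Field F] [Fintype F] (q : ℕ) (hq : Fintype.card F = q)
    (n : ℕ) (hn : 1 ≤ n) :
    ∃ T : Fin (q ^ n - 1) → Matrix.GeneralLinearGroup (Fin n) F,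
      Function.Injective T ∧
      ∀ i j, i ≠ j →
        IsUnit ((T i : Matrix (Fin n) (Fin n) F) - (T j : Matrix (Fin n) (Fin n) F)) := by
  classical
  set g : F[X] := X ^ q ^ n - X with hg
  let K := g.SplittingField
  haveI : Finite K := Module.finite_of_finite F
  haveI : Fintype K := Fintype.ofFinite K
  have hcardK : Fintype.card K = q ^ n := aux_card_splittingField F q n hq hn K
  have hq2 : 1 < q := hq ▸ Fintype.one_lt_card
  -- finrank F K = n
  have hfr : Module.finrank F K = n := by
    have := Module.card_eq_pow_finrank (K := F) (V := K)
    rw [hcardK, hq] at this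
    exact (Nat.pow_right_injective hq2 this).symm
  let b : Module.Basis (Fin n) F K := Module.finBasisOfFinrankEq F K hfr
  -- the algebra map to matrices
  let M : K →ₐ[F] Matrix (Fin n) (Fin n) F :=
    (LinearMap.toMatrixAlgEquiv b).toAlgHom.comp (Algebra.lmul F K)
  haveI : Nonempty (Fin n) := ⟨⟨0, hn⟩⟩
  have hMinj : Function.Injective M := M.toRingHom.injective
  -- enumerate the units of K
  have hcardU : Fintype.card Kˣ = q ^ n - 1 := by
    rw [Fintype.card_units, hcardK]
  let e : Fin (q ^ n - 1) ≃ Kˣ := (Fintype.equivFinOfCardEq hcardU).symm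
  refine ⟨fun i => Units.map (M : K →* Matrix (Fin n) (Fin n) F) (e i), ?_, ?_⟩
  · intro i j hij
    apply e.injective
    ext
    apply hMinj
    exact congrArg Units.val hij
  · intro i j hij
    have hx : ((e i : K) - (e j : K)) ≠ 0 := by
      rw [sub_ne_zero]
      exact fun h => hij (e.injective (Units.ext h))
    have : ((Units.map (M : K →* Matrix (Fin n) (Fin n) F) (e i) : _) : Matrix (Fin n) (Fin n) F)
        - ((Units.map (M : K →* Matrix (Fin n) (Fin n) F) (e j) : _) : Matrix (Fin n) (Fin n) F)
        = M ((e i : K) - (e j : K)) := by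
      simp [map_sub]
    rw [this]
    exact (IsUnit.mk0 _ hx).map M
end

section
/- Let Γ be a vertex-transitive finite graph on v vertices, let C be a clique of Γ and A a coclique (independent set) of Γ. Then |C| · |A| ≤ v. -/
/-- **Clique–coclique bound** (Cameron–Ku): in a vertex-transitive graph on `v` vertices,
if `C` is a clique and `A` is a coclique then `|C| * |A| ≤ v`. -/
theorem clique_coclique_bound
    (V : Type*) [Fintype V] (Γ : SimpleGraph V)
    (htrans : ∀ u v : V, ∃ φ : Γ ≃g Γ, φ u = v)
    (C A : Finset V)
    (hC : Γ.IsClique (C : Set V))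
    (hA : ∀ a ∈ A, ∀ b ∈ A, a ≠ b → ¬ Γ.Adj a b) :
    C.card * A.card ≤ Fintype.card V := by
  classical
  cases isEmpty_or_nonempty V with
  | inl h =>
    have : C = ∅ := Finset.eq_empty_of_isEmpty C
    simp [this]
  | inr h =>
  obtain ⟨v0⟩ := h
  haveI : Fintype (Γ ≃g Γ) :=
    Fintype.ofInjective (fun g : Γ ≃g Γ => (g : V → V)) (by
      intro g h hgh
      exact DFunLike.coe_injective (by exact hgh))
  set f : V → V → ℕ := fun c a => (Finset.univ.filter (fun g : Γ ≃g Γ => g c = a)).card with hfdef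
  have hf : ∀ c a c' a', f c a = f c' a' := by
    intro c a c' a'
    obtain ⟨ψ, hψ⟩ := htrans c' c
    obtain ⟨φ, hφ⟩ := htrans a a'
    apply Finset.card_bij' (fun g _ => (ψ.trans g).trans φ)
      (fun h _ => (ψ.symm.trans h).trans φ.symm)
    · intro g hg
      simp only [Finset.mem_filter, Finset.mem_univ, true_and] at hg ⊢
      simp [RelIso.trans_apply, hψ, hg, hφ]
    · intro g hg
      simp only [Finset.mem_filter, Finset.mem_univ, true_and] at hg ⊢
      have h1 : ψ.symm c = c' := by
        rw [← hψ]; exact ψ.symm_apply_apply c'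
      have h2 : φ.symm a' = a := by
        rw [← hφ]; exact φ.symm_apply_apply a
      simp [RelIso.trans_apply, h1, hg, h2]
    · intro g hg
      apply DFunLike.coe_injective
      funext x
      simp [RelIso.trans_apply]
    · intro g hg
      apply DFunLike.coe_injective
      funext x
      simp [RelIso.trans_apply]
  set k : ℕ := f v0 v0 with hkdef
  have hk1 : 1 ≤ k := by
    rw [hkdef, hfdef]
    apply Finset.card_pos.mpr
    exact ⟨RelIso.refl _, by simp⟩
  have hG : Fintype.card (Γ ≃g Γ) = Fintype.card V * k := by
    rw [← Finset.card_univ, Finset.card_eq_sum_card_fiberwise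
      (f := fun g : Γ ≃g Γ => g v0) (t := Finset.univ) (fun _ _ => Finset.mem_univ _)]
    have he : ∀ a ∈ (Finset.univ : Finset V),
        (Finset.univ.filter (fun g : Γ ≃g Γ => g v0 = a)).card = k :=
      fun a _ => hf v0 a v0 v0
    rw [Finset.sum_congr rfl he, Finset.sum_const, smul_eq_mul, Finset.card_univ]
  have hN1 : ∑ g : Γ ≃g Γ, ∑ c ∈ C, ∑ a ∈ A, (if g c = a then 1 else 0)
      ≤ Fintype.card (Γ ≃g Γ) := by
    calc ∑ g : Γ ≃g Γ, ∑ c ∈ C, ∑ a ∈ A, (if g c = a then 1 else 0)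
        ≤ ∑ _g : Γ ≃g Γ, 1 := by
          apply Finset.sum_le_sum
          intro g _
          have hinner : (∑ c ∈ C, ∑ a ∈ A, if g c = a then 1 else 0)
              = (C.filter (fun c => g c ∈ A)).card := by
            rw [Finset.card_filter]
            refine Finset.sum_congr rfl fun c _ => ?_
            rw [Finset.sum_ite_eq A (g c) (fun _ => 1)]
          rw [hinner]
          apply Finset.card_le_one.mpr
          intro x hx y hy
          simp only [Finset.mem_filter] at hx hy
          by_contra hxy
          have hadj : Γ.Adj x y := hC hx.1 hy.1 hxy
          have hadj' : Γ.Adj (g x) (g y) := g.map_adj_iff.mpr hadj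
          exact hA _ hx.2 _ hy.2 (fun e => hxy (g.injective e)) hadj'
      _ = Fintype.card (Γ ≃g Γ) := by simp
  have hN2 : ∑ g : Γ ≃g Γ, ∑ c ∈ C, ∑ a ∈ A, (if g c = a then 1 else 0)
      = C.card * A.card * k := by
    rw [Finset.sum_comm]
    have step : ∀ c, (∑ g : Γ ≃g Γ, ∑ a ∈ A, if g c = a then 1 else 0) = A.card * k := by
      intro c
      rw [Finset.sum_comm]
      have inner : ∀ a ∈ A, (∑ g : Γ ≃g Γ, if g c = a then 1 else 0) = k := by
        intro a _
        rw [← Finset.card_filter]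
        exact hf c a v0 v0
      rw [Finset.sum_congr rfl inner, Finset.sum_const, smul_eq_mul]
    rw [Finset.sum_congr rfl (fun c _ => step c), Finset.sum_const, smul_eq_mul, mul_assoc]
  have hfin : C.card * A.card * k ≤ Fintype.card V * k := by
    rw [← hN2, ← hG]; exact hN1
  exact Nat.le_of_mul_le_mul_right hfin hk1
end

section
/- Let q be a prime power and let n, l be positive integers. An n-spread of F_q^l, i.e., a collection {W_1, …, W_t} of n-dimensional subspaces of F_q^l such that every non-zero vector of F_q^l belongs to exactly one W_i, exists if and only if n divides l. -/
open Polynomial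

/-- Number-theoretic key lemma: if `q ^ n - 1 ∣ q ^ l - 1` with `q ≥ 2`, then `n ∣ l`. -/
lemma aux_pow_sub_one_dvd {q n : ℕ} (hq : 2 ≤ q) (hn : 1 ≤ n) :
    ∀ l, (q ^ n - 1 ∣ q ^ l - 1) → n ∣ l := by
  intro l
  induction l using Nat.strong_induction_on with
  | _ l ih =>
    intro hdvd
    rcases lt_or_ge l n with hln | hnl
    · rcases Nat.eq_zero_or_pos l with rfl | hl0
      · exact dvd_zero n
      · exfalso
        have h1 : q ^ l < q ^ n := Nat.pow_lt_pow_right hq hln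
        have h2 : 2 ≤ q ^ l := le_trans hq (Nat.le_self_pow (by omega) q)
        have := Nat.le_of_dvd (by omega) hdvd
        omega
    · have e1 : q ^ (l - n) * q ^ n = q ^ l := by
        rw [← pow_add]; congr 1; omega
      have h3 : q ^ (l - n) ≤ q ^ l := Nat.pow_le_pow_right (by omega) (by omega)
      have h4 : 1 ≤ q ^ (l - n) := Nat.one_le_pow _ _ (by omega)
      have e2 : q ^ (l - n) * (q ^ n - 1) = q ^ l - q ^ (l - n) := by
        rw [Nat.mul_sub, mul_one, e1]
      have key : q ^ n - 1 ∣ q ^ (l - n) - 1 := by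
        have h5 : q ^ (l - n) - 1 = (q ^ l - 1) - q ^ (l - n) * (q ^ n - 1) := by omega
        rw [h5]
        exact Nat.dvd_sub hdvd (dvd_mul_left _ _)
      obtain ⟨c, hc⟩ := ih (l - n) (by omega) key
      exact ⟨c + 1, by rw [Nat.mul_add, mul_one, ← hc]; omega⟩

/-- The splitting field of `X ^ (#F) ^ n - X` over a finite field `F` has degree `n`. -/
lemma aux_finrank_splittingField (F : Type*) [Field F] [Fintype F] (n : ℕ) (hn : n ≠ 0) :
    Module.finrank F (X ^ (Fintype.card F) ^ n - X : F[X]).SplittingField = n := by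
  classical
  obtain ⟨e, hpprime, hcard⟩ := FiniteField.card F (ringChar F)
  haveI : Fact (ringChar F).Prime := ⟨hpprime⟩
  set p := ringChar F
  set q := Fintype.card F with hqdef
  have hq2 : 2 ≤ q := Fintype.one_lt_card
  have hqn1 : 1 < q ^ n := Nat.one_lt_pow hn (by omega)
  have hqn : q ^ n = p ^ ((e : ℕ) * n) := by rw [hcard, ← pow_mul]
  set g : F[X] := X ^ q ^ n - X with hg
  set K := g.SplittingField with hK
  haveI : CharP K p := (Algebra.charP_iff F K p).mp inferInstance
  have aux : g ≠ 0 := FiniteField.X_pow_card_sub_X_ne_zero F hqn1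
  have hsep : g.Separable := by
    refine galois_poly_separable p (q ^ n) ?_
    rw [hqn]
    exact dvd_pow_self p (by positivity)
  have key : Fintype.card (g.rootSet K) = g.natDegree :=
    card_rootSet_eq_natDegree hsep (SplittingField.splits g)
  have ndeg : g.natDegree = q ^ n := FiniteField.X_pow_card_sub_X_natDegree_eq F hqn1
  haveI : Finite K := Module.finite_of_finite F
  haveI : Fintype K := Fintype.ofFinite K
  -- every element of `K` is a root of `g`
  have hroot : ∀ x : K, x ^ q ^ n = x := by
    have hadj : Algebra.adjoin F (g.rootSet K) = ⊤ := SplittingField.adjoin_rootSet g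
    set φ : K →+* K := iterateFrobenius K p ((e : ℕ) * n) with hφ
    have hφ_def : ∀ x : K, φ x = x ^ q ^ n := by
      intro x; rw [hφ, iterateFrobenius_def, ← hqn]
    have hsub : Set.range (algebraMap F K) ∪ g.rootSet K ⊆ ↑(RingHom.eqLocus φ (RingHom.id K)) := by
      rintro x (⟨r, rfl⟩ | hx)
      · show φ _ = _
        rw [hφ_def, ← map_pow, hqdef, FiniteField.pow_card_pow]
        rfl
      · show φ x = x
        rw [hφ_def]
        have := (mem_rootSet_of_ne aux).mp hx
        simp only [hg, map_sub, map_pow, aeval_X, sub_eq_zero] at this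
        exact this
    intro x
    have hx : x ∈ Algebra.adjoin F (g.rootSet K) := hadj ▸ Algebra.mem_top
    rw [Algebra.mem_adjoin_iff] at hx
    have h : φ x = x := Subring.closure_le.mpr hsub hx
    rw [hφ_def] at h
    exact h
  have huniv : g.rootSet K = Set.univ := by
    rw [Set.eq_univ_iff_forall]
    intro x
    rw [mem_rootSet_of_ne aux]
    simp only [hg, map_sub, map_pow, aeval_X, sub_eq_zero]
    exact hroot x
  have e1 : Fintype.card (g.rootSet K) = Fintype.card K :=
    Fintype.card_congr ((Equiv.setCongr huniv).trans (Equiv.Set.univ K))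
  have hcardK : Fintype.card K = q ^ n := by rw [← e1, key, ndeg]
  have := Module.card_eq_pow_finrank (K := F) (V := K)
  rw [hcardK] at this
  exact (Nat.pow_right_injective hq2 this).symm

/-- An `n`-spread of `F_q^l` (a collection of `n`-dimensional subspaces such that every
non-zero vector lies in exactly one of them) exists if and only if `n` divides `l`. -/
theorem spread_exists_iff_dvd
    (F : Type*) [Field F] [Fintype F] (q : ℕ) (hq : Fintype.card F = q)
    (n l : ℕ) (hn : 1 ≤ n) (hl : 1 ≤ l) :
    (∃ 𝒮 : Set (Submodule F (Fin l → F)),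
        (∀ W ∈ 𝒮, Module.finrank F W = n) ∧
        (∀ v : Fin l → F, v ≠ 0 → ∃! W : Submodule F (Fin l → F), W ∈ 𝒮 ∧ v ∈ W)) ↔
      n ∣ l := by
  classical
  have hq2 : 2 ≤ q := hq ▸ Fintype.one_lt_card
  constructor
  · -- forward direction: counting
    rintro ⟨𝒮, hdim, huniq⟩
    haveI : Finite (Submodule F (Fin l → F)) :=
      Finite.of_injective (fun W => (W : Set (Fin l → F))) SetLike.coe_injective
    have hfin : 𝒮.Finite := Set.toFinite 𝒮
    set T := hfin.toFinset with hT
    set NW : Submodule F (Fin l → F) → Finset (Fin l → F) :=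
      fun W => Finset.univ.filter (fun v => v ∈ W ∧ v ≠ 0) with hNW
    have hVcard : Fintype.card (Fin l → F) = q ^ l := by
      simp [hq]
    have hWcard : ∀ W ∈ T, (NW W).card = q ^ n - 1 := by
      intro W hW
      have h1 : Fintype.card W = q ^ n := by
        rw [Module.card_eq_pow_finrank (K := F) (V := W), hq, hdim W (hfin.mem_toFinset.mp hW)]
      have h2 : NW W = Finset.univ.filter (fun v => v ∈ W) \ {0} := by
        ext v
        simp [hNW, and_comm]
      have h3 : (Finset.univ.filter (fun v => v ∈ W)).card = q ^ n := by
        rw [← h1]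
        exact (Fintype.card_subtype (fun v => v ∈ W)).symm
      rw [h2, Finset.card_sdiff_of_subset (by simp [W.zero_mem]), h3, Finset.card_singleton]
    have hdisj : ∀ W₁ ∈ T, ∀ W₂ ∈ T, W₁ ≠ W₂ → Disjoint (NW W₁) (NW W₂) := by
      intro W₁ h₁ W₂ h₂ hne
      rw [Finset.disjoint_left]
      intro v hv₁ hv₂
      simp only [hNW, Finset.mem_filter] at hv₁ hv₂
      obtain ⟨W, -, hWu⟩ := huniq v hv₁.2.2
      exact hne ((hWu W₁ ⟨hfin.mem_toFinset.mp h₁, hv₁.2.1⟩).trans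
        (hWu W₂ ⟨hfin.mem_toFinset.mp h₂, hv₂.2.1⟩).symm)
    have hpart : Finset.univ.filter (fun v : Fin l → F => v ≠ 0) = T.biUnion NW := by
      ext v
      simp only [Finset.mem_filter, Finset.mem_univ, true_and, Finset.mem_biUnion, hNW,
        hT, Set.Finite.mem_toFinset]
      constructor
      · intro hv
        obtain ⟨W, ⟨hW𝒮, hvW⟩, -⟩ := huniq v hv
        exact ⟨W, hW𝒮, hvW, hv⟩
      · rintro ⟨W, -, -, hv⟩
        exact hv
    have hcount : q ^ l - 1 = T.card * (q ^ n - 1) := by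
      have lhs : (Finset.univ.filter (fun v : Fin l → F => v ≠ 0)).card = q ^ l - 1 := by
        have : Finset.univ.filter (fun v : Fin l → F => v ≠ 0) = Finset.univ \ {0} := by
          ext v; simp
        rw [this, Finset.card_sdiff_of_subset (by simp), Finset.card_singleton, Finset.card_univ, hVcard]
      rw [← lhs, hpart, Finset.card_biUnion hdisj]
      rw [Finset.sum_congr rfl hWcard, Finset.sum_const, smul_eq_mul]
    have hdvd : q ^ n - 1 ∣ q ^ l - 1 := by
      rw [hcount]
      exact dvd_mul_left _ _
    exact aux_pow_sub_one_dvd hq2 hn l hdvd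
  · -- backward direction: construction via a degree-`n` field extension
    rintro ⟨m, hm⟩
    subst hq
    set K := (X ^ (Fintype.card F) ^ n - X : F[X]).SplittingField with hKdef
    have hKrank : Module.finrank F K = n := aux_finrank_splittingField F n (by omega)
    haveI : FiniteDimensional F K := inferInstance
    have hVrank : Module.finrank F (Fin m → K) = l := by
      rw [Module.finrank_pi_fintype, Finset.sum_const, Finset.card_univ, Fintype.card_fin,
        smul_eq_mul, hKrank, hm, Nat.mul_comm]
    have hFlrank : Module.finrank F (Fin l → F) = l := by
      simp
    obtain ⟨e⟩ : Nonempty ((Fin m → K) ≃ₗ[F] (Fin l → F)) :=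
      FiniteDimensional.nonempty_linearEquiv_of_finrank_eq (hVrank.trans hFlrank.symm)
    refine ⟨{W | ∃ v : Fin m → K, v ≠ 0 ∧
      W = (Submodule.restrictScalars F (K ∙ v)).map (e : (Fin m → K) →ₗ[F] (Fin l → F))}, ?_, ?_⟩
    · rintro W ⟨v, hv, rfl⟩
      rw [LinearEquiv.finrank_map_eq]
      have h2 : Module.finrank K (Submodule.restrictScalars F (K ∙ v)) = 1 := by
        rw [(Submodule.restrictScalarsEquiv F K (Fin m → K) (K ∙ v)).finrank_eq,
          finrank_span_singleton hv]
      rw [← Module.finrank_mul_finrank F K ↥(Submodule.restrictScalars F (K ∙ v)), h2,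
        hKrank, mul_one]
    · intro v hv
      have hev : e.symm v ≠ 0 := by
        intro h
        apply hv
        have := congrArg e h
        simpa using this
      refine ⟨(Submodule.restrictScalars F (K ∙ e.symm v)).map
        (e : (Fin m → K) →ₗ[F] (Fin l → F)),
        ⟨⟨e.symm v, hev, rfl⟩, ?_⟩, ?_⟩
      · refine Submodule.mem_map.mpr ⟨e.symm v, ?_, by simp⟩
        rw [Submodule.restrictScalars_mem]
        exact Submodule.mem_span_singleton_self _
      · rintro W ⟨⟨u, hu, rfl⟩, hvW⟩
        obtain ⟨x, hx, hxv⟩ := Submodule.mem_map.mp hvW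
        rw [Submodule.restrictScalars_mem] at hx
        have hxe : x = e.symm v := by
          have := congrArg e.symm hxv
          simpa using this
        subst hxe
        -- `e.symm v ∈ K ∙ u`, both nonzero, so the spans agree
        obtain ⟨c, hc⟩ := Submodule.mem_span_singleton.mp hx
        have hc0 : c ≠ 0 := by
          rintro rfl
          rw [zero_smul] at hc
          exact hev hc.symm
        have hspan : (K ∙ u) = K ∙ e.symm v := by
          rw [← hc]
          exact (Submodule.span_singleton_smul_eq (IsUnit.mk0 c hc0) u).symm
        rw [hspan]
end

section
/- Let n ≥ 1 and let F be a subset of the symmetric group S_n such that for any f, g ∈ F there exists x ∈ {1, …, n} with f(x) = g(x). Then |F| ≤ (n−1)!. -/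
/-- **Deza–Frankl**: an intersecting family of permutations of `n` points has size at
most `(n-1)!`. -/
theorem deza_frankl
    (n : ℕ) (hn : 1 ≤ n) (𝓕 : Finset (Equiv.Perm (Fin n)))
    (h𝓕 : ∀ f ∈ 𝓕, ∀ g ∈ 𝓕, ∃ x : Fin n, f x = g x) :
    𝓕.card ≤ Nat.factorial (n - 1) := by
  cases n with
  | zero => omega
  | succ m =>
  simp only [Nat.add_sub_cancel]
  -- canonical representative of the coset f⟨rotation⟩, fixing 0
  set Φ : Equiv.Perm (Fin (m + 1)) → Equiv.Perm (Fin (m + 1)) :=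
    fun f => f * Equiv.addRight (f⁻¹ 0) with hΦ
  have hΦ0 : ∀ f, Φ f 0 = 0 := by
    intro f
    simp [hΦ, Equiv.Perm.mul_apply]
  set ψ : Equiv.Perm (Fin (m + 1)) → Equiv.Perm (Fin m) :=
    fun f => (Equiv.Perm.decomposeFin (Φ f)).2 with hψ
  have hinj : Set.InjOn ψ 𝓕 := by
    intro f hf g hg hfg
    have hdec : Equiv.Perm.decomposeFin (Φ f) = Equiv.Perm.decomposeFin (Φ g) := by
      have hfst : ∀ p : Equiv.Perm (Fin (m + 1)), (Equiv.Perm.decomposeFin p).1 = p 0 := by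
        intro p
        conv_rhs => rw [← Equiv.symm_apply_apply Equiv.Perm.decomposeFin p]
        obtain ⟨a, σ⟩ := Equiv.Perm.decomposeFin p
        simp
      have h1 : (Equiv.Perm.decomposeFin (Φ f)).1 = (Equiv.Perm.decomposeFin (Φ g)).1 := by
        rw [hfst, hfst, hΦ0, hΦ0]
      exact Prod.ext h1 hfg
    have hΦeq : Φ f = Φ g := Equiv.Perm.decomposeFin.injective hdec
    -- so g = f ∘ (· + a) with a = f⁻¹ 0 - g⁻¹ 0
    have key : ∀ x : Fin (m + 1), f (x + f⁻¹ 0) = g (x + g⁻¹ 0) := by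
      intro x
      have := congrArg (fun p => p x) hΦeq
      simpa [hΦ, Equiv.Perm.mul_apply] using this
    obtain ⟨x, hx⟩ := h𝓕 f hf g hg
    have key2 : f x = g (x - f⁻¹ 0 + g⁻¹ 0) := by
      have := key (x - f⁻¹ 0)
      simpa using this
    have hx2 : g x = g (x - f⁻¹ 0 + g⁻¹ 0) := by rw [← hx, key2]
    have hxx : x = x - f⁻¹ 0 + g⁻¹ 0 := g.injective hx2
    have hab : f⁻¹ 0 = g⁻¹ 0 := by open Fin.CommRing in linear_combination hxx
    have hfg2 : f * Equiv.addRight (f⁻¹ 0) = g * Equiv.addRight (g⁻¹ 0) := hΦeq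
    rw [← hab] at hfg2
    exact mul_right_cancel hfg2
  calc 𝓕.card ≤ (Finset.univ : Finset (Equiv.Perm (Fin m))).card :=
        Finset.card_le_card_of_injOn ψ (fun _ _ => Finset.mem_univ _) hinj
    _ = Nat.factorial m := by
        rw [Finset.card_univ, Fintype.card_perm, Fintype.card_fin]
end
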